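/- For every unit quaternion q, the 3×3 real matrix π₁(q) whose columns are the coordinate vectors (with respect to the basis 𝕚, 𝕛, 𝕜 of the purely imaginary quaternions) of q*𝕚*conj q, q*𝕛*conj q, and q*𝕜*conj q is a special orthogonal matrix: (π₁(q))ᵀ · π₁(q) = 1 and det(π₁(q)) = 1. Moreover the first column of π₁(q) is the coordinate vector of the Hopf image π(q) = q*𝕚*conj q; that is, the Hopf fibration factors as π = π₂ ∘ π₁, where π₂ : SO(3) → S² extracts the first column. -/
import Mathlib


open Quaternion Matrix

noncomputable section

/-- The imaginary unit `𝕚` of the quaternions. -/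
def qi : ℍ := ⟨0, 1, 0, 0⟩

/-- The imaginary unit `𝕛` of the quaternions. -/
def qj : ℍ := ⟨0, 0, 1, 0⟩

/-- The imaginary unit `𝕜` of the quaternions. -/
def qk : ℍ := ⟨0, 0, 0, 1⟩

/-- The coordinate vector of a purely imaginary quaternion with respect to the
basis `𝕚, 𝕛, 𝕜`. -/
def coords (x : ℍ) : Fin 3 → ℝ := ![x.imI, x.imJ, x.imK]

/-- `π₁ : S³ → SO(3)`: the matrix whose columns are the coordinate vectors of
`q*𝕚*conj q`, `q*𝕛*conj q`, `q*𝕜*conj q`. -/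
def pi1 (q : ℍ) : Matrix (Fin 3) (Fin 3) ℝ :=
  Matrix.of fun i j => coords (q * (![qi, qj, qk] j) * star q) i

set_option maxHeartbeats 1000000 in
theorem stmt_14 (q : ℍ) (hq : ‖q‖ = 1) :
    (pi1 q)ᵀ * pi1 q = 1 ∧ (pi1 q).det = 1 ∧
    (∀ i : Fin 3, pi1 q i 0 = coords (q * qi * star q) i) := by
  have h : q.re^2 + q.imI^2 + q.imJ^2 + q.imK^2 = 1 := by
    have h1 : Quaternion.normSq q = 1 := by
      rw [Quaternion.normSq_eq_norm_mul_self, hq]; norm_num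
    rw [Quaternion.normSq_def'] at h1
    linarith [h1]
  refine ⟨?_, ?_, fun i => rfl⟩
  · ext i j
    fin_cases i <;> fin_cases j <;>
      simp [pi1, coords, qi, qj, qk, Matrix.mul_apply, Fin.sum_univ_three,
        Matrix.one_apply] <;>
      first
        | ring1
        | linear_combination (q.re^2 + q.imI^2 + q.imJ^2 + q.imK^2 + 1) * h
  · simp [Matrix.det_fin_three, pi1, coords, qi, qj, qk]
    linear_combination ((q.re^2 + q.imI^2 + q.imJ^2 + q.imK^2)^2
      + (q.re^2 + q.imI^2 + q.imJ^2 + q.imK^2) + 1) * h
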